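/- Let f = Φa + w where a is k-sparse with least-magnitude nonzero entry a_min, ‖w‖_2 ≤ ε, and √(1−δ_k)|a_min| > ε. If t > (ν_k|a_min| + ε)/(√(1−δ_k)|a_min| − ε), then for every i outside supp(a): |⟨f, φ_i⟩| < t·‖f‖_2. (Thresholding never selects an incorrect atom.) -/

import Mathlib

open Finset

lemma cs_abs {ι : Type*} (s : Finset ι) (f g : ι → ℝ) :
    |∑ i ∈ s, f i * g i| ≤ Real.sqrt (∑ i ∈ s, f i ^ 2) * Real.sqrt (∑ i ∈ s, g i ^ 2) := by
  rw [← Real.sqrt_sq_eq_abs, ← Real.sqrt_mul (by positivity)]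
  exact Real.sqrt_le_sqrt (sum_mul_sq_le_sq_mul_sq ..)

lemma euc_norm_eq {n : ℕ} (v : EuclideanSpace ℝ (Fin n)) :
    ‖v‖ = Real.sqrt (∑ r, v r ^ 2) := by
  rw [EuclideanSpace.norm_eq]
  congr 1
  exact Finset.sum_congr rfl fun r _ => by rw [Real.norm_eq_abs, sq_abs]

lemma sqrt_triangle {n : ℕ} (x y : Fin n → ℝ) :
    Real.sqrt (∑ r, x r ^ 2) - Real.sqrt (∑ r, y r ^ 2)
      ≤ Real.sqrt (∑ r, (x r + y r) ^ 2) := by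
  have h := norm_sub_norm_le (E := EuclideanSpace ℝ (Fin n))
    (WithLp.toLp 2 x) (-(WithLp.toLp 2 y))
  rw [norm_neg, sub_neg_eq_add] at h
  rw [euc_norm_eq, euc_norm_eq, euc_norm_eq] at h
  convert h using 3 with r
  simp

/-- If f = Φa + w with a k-sparse, ‖w‖₂ ≤ ε, √(1−δ_k)|a_min| > ε, and
t > (ν_k|a_min| + ε)/(√(1−δ_k)|a_min| − ε), then |⟨f, φ_i⟩| < t‖f‖₂ for every
i outside supp(a): thresholding never selects an incorrect atom. -/
theorem threshold_rejects_incorrect_atoms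
    (n d k : ℕ)
    (Φ : Matrix (Fin n) (Fin d) ℝ)
    (hcol : ∀ i : Fin d, ∑ r, Φ r i ^ 2 = 1)
    (δ ν : ℝ) (hδ0 : 0 ≤ δ) (hδ1 : δ < 1)
    (hδ : ∀ v : Fin d → ℝ, ({i | v i ≠ 0} : Set (Fin d)).ncard ≤ k →
        (1 - δ) * ∑ i, v i ^ 2 ≤ ∑ r, (Φ.mulVec v r) ^ 2 ∧
        ∑ r, (Φ.mulVec v r) ^ 2 ≤ (1 + δ) * ∑ i, v i ^ 2)
    (hν : ∀ (i : Fin d) (Λ' : Finset (Fin d)), i ∉ Λ' → Λ'.card ≤ k →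
        Real.sqrt (∑ j ∈ Λ', (∑ r, Φ r i * Φ r j) ^ 2) ≤ ν)
    (a : Fin d → ℝ) (Λ : Finset (Fin d))
    (hsupp : ∀ i, a i ≠ 0 ↔ i ∈ Λ) (hΛ : Λ.card = k)
    (amin : ℝ)
    (hmin_mem : ∃ i, a i ≠ 0 ∧ |a i| = amin)
    (hmin_le : ∀ i, a i ≠ 0 → amin ≤ |a i|)
    (w f : Fin n → ℝ) (ε : ℝ) (hε : 0 ≤ ε)
    (hw : Real.sqrt (∑ r, w r ^ 2) ≤ ε)
    (hf : f = Φ.mulVec a + w)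
    (hnoise : ε < Real.sqrt (1 - δ) * amin)
    (t : ℝ)
    (ht : (ν * amin + ε) / (Real.sqrt (1 - δ) * amin - ε) < t) :
    ∀ i ∉ Λ, |∑ r, f r * Φ r i| < t * Real.sqrt (∑ r, f r ^ 2) := by
  intro i hi
  set c : ℝ := Real.sqrt (1 - δ) with hc_def
  have hc : 0 ≤ c := Real.sqrt_nonneg _
  have hν0 : 0 ≤ ν := by
    have := hν i ∅ (by simp) (by simp)
    simpa using this
  have hamin : 0 < amin := by
    rcases le_or_gt amin 0 with h | h
    · have : c * amin ≤ 0 := mul_nonpos_of_nonneg_of_nonpos hc h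
      linarith
    · exact h
  set A : ℝ := Real.sqrt (∑ j, a j ^ 2) with hA_def
  have hA0 : 0 ≤ A := Real.sqrt_nonneg _
  have hAmin : amin ≤ A := by
    obtain ⟨j, hj, hjm⟩ := hmin_mem
    have h1 : a j ^ 2 ≤ ∑ j', a j' ^ 2 :=
      Finset.single_le_sum (f := fun j' => a j' ^ 2) (fun _ _ => sq_nonneg _) (mem_univ j)
    calc amin = |a j| := hjm.symm
      _ = Real.sqrt (a j ^ 2) := (Real.sqrt_sq_eq_abs _).symm
      _ ≤ A := Real.sqrt_le_sqrt h1
  have hsuppcard : ({j | a j ≠ 0} : Set (Fin d)).ncard ≤ k := by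
    have hset : ({j | a j ≠ 0} : Set (Fin d)) = ↑Λ := by
      ext j; simp [hsupp]
    rw [hset, Set.ncard_coe_finset, hΛ]
  have hlow : (1 - δ) * ∑ j, a j ^ 2 ≤ ∑ r, (Φ.mulVec a r) ^ 2 := (hδ a hsuppcard).1
  have hG_ge : c * A ≤ Real.sqrt (∑ r, (Φ.mulVec a r) ^ 2) := by
    calc c * A = Real.sqrt ((1 - δ) * ∑ j, a j ^ 2) := (Real.sqrt_mul (by linarith) _).symm
      _ ≤ Real.sqrt (∑ r, (Φ.mulVec a r) ^ 2) := Real.sqrt_le_sqrt hlow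
  have hF_ge : c * A - ε ≤ Real.sqrt (∑ r, f r ^ 2) := by
    have h := sqrt_triangle (Φ.mulVec a) w
    have h2 : ∑ r, (Φ.mulVec a r + w r) ^ 2 = ∑ r, f r ^ 2 :=
      Finset.sum_congr rfl fun r _ => by rw [hf]; simp [Pi.add_apply]
    rw [h2] at h
    linarith
  have hwi : |∑ r, w r * Φ r i| ≤ ε := by
    have h1 := cs_abs Finset.univ w (fun r => Φ r i)
    rw [hcol i, Real.sqrt_one, mul_one] at h1
    exact h1.trans hw
  have hGi : |∑ r, Φ.mulVec a r * Φ r i| ≤ A * ν := by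
    have hswap : ∑ r, Φ.mulVec a r * Φ r i
        = ∑ j ∈ Λ, a j * (∑ r, Φ r i * Φ r j) := by
      have h1 : ∑ r, Φ.mulVec a r * Φ r i
          = ∑ j, a j * (∑ r, Φ r i * Φ r j) := by
        simp only [Matrix.mulVec, dotProduct, Finset.sum_mul, Finset.mul_sum]
        rw [Finset.sum_comm]
        exact Finset.sum_congr rfl fun j _ => Finset.sum_congr rfl fun r _ => by ring
      rw [h1]
      symm
      apply Finset.sum_subset (Finset.subset_univ _)
      intro j _ hjΛ
      have : a j = 0 := by
        by_contra h; exact hjΛ ((hsupp j).mp h)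
      simp [this]
    rw [hswap]
    have h1 := cs_abs Λ a (fun j => ∑ r, Φ r i * Φ r j)
    have h2 : Real.sqrt (∑ j ∈ Λ, a j ^ 2) = A := by
      rw [hA_def]
      congr 1
      apply Finset.sum_subset (Finset.subset_univ _)
      intro j _ hjΛ
      have : a j = 0 := by
        by_contra h; exact hjΛ ((hsupp j).mp h)
      simp [this]
    have h3 := hν i Λ hi (le_of_eq hΛ)
    rw [h2] at h1
    calc |∑ j ∈ Λ, a j * (∑ r, Φ r i * Φ r j)|
        ≤ A * Real.sqrt (∑ j ∈ Λ, (∑ r, Φ r i * Φ r j) ^ 2) := h1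
      _ ≤ A * ν := mul_le_mul_of_nonneg_left h3 hA0
  have hfi : |∑ r, f r * Φ r i| ≤ ν * A + ε := by
    have h1 : ∑ r, f r * Φ r i = (∑ r, Φ.mulVec a r * Φ r i) + ∑ r, w r * Φ r i := by
      rw [← Finset.sum_add_distrib]
      exact Finset.sum_congr rfl fun r _ => by rw [hf]; simp [Pi.add_apply]; ring
    rw [h1]
    calc |(∑ r, Φ.mulVec a r * Φ r i) + ∑ r, w r * Φ r i|
        ≤ |∑ r, Φ.mulVec a r * Φ r i| + |∑ r, w r * Φ r i| := abs_add_le _ _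
      _ ≤ A * ν + ε := add_le_add hGi hwi
      _ = ν * A + ε := by ring
  have hD : 0 < c * amin - ε := by linarith
  have ht' : ν * amin + ε < t * (c * amin - ε) := by
    rw [div_lt_iff₀ hD] at ht; linarith
  have ht0 : 0 < t := by
    have h0 : 0 ≤ (ν * amin + ε) / (c * amin - ε) := by positivity
    linarith
  have htc : 0 < t * c - ν := by nlinarith
  have key : ν * A + ε < t * (c * A - ε) := by
    nlinarith [mul_le_mul_of_nonneg_left hAmin (le_of_lt htc)]
  have hFn : t * (c * A - ε) ≤ t * Real.sqrt (∑ r, f r ^ 2) :=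
    mul_le_mul_of_nonneg_left hF_ge (le_of_lt ht0)
  linarith
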